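/- arXiv:2508.17559 — 3 statements merged into one kernel-verified Lean document; each statement's English description precedes it below -/
import Mathlib

section
/- The burning number of the hypercube graph Q_n is at most ⌈n/2⌉ + 1. -/
open Finset

/-- A burning sequence of length `b`: vertex `v i` is burned at time `i+1`,
so it covers the ball of radius `b - (i+1)` by time `b`. -/
def IsBurningSeq {V : Type*} (G : SimpleGraph V) {b : ℕ} (v : Fin b → V) : Prop :=
  ∀ x : V, ∃ i : Fin b, G.dist (v i) x ≤ b - 1 - (i : ℕ)

/-- The burning number of a graph: the least length of a burning sequence. -/
noncomputable def burningNumber {V : Type*} (G : SimpleGraph V) : ℕ :=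
  sInf {b | ∃ v : Fin b → V, IsBurningSeq G v}

/-- The hypercube graph `Q_n` on `{0,1}^n`: adjacency is Hamming distance one. -/
def cubeGraph (n : ℕ) : SimpleGraph (Fin n → Bool) where
  Adj x y := hammingDist x y = 1
  symm := ⟨fun x y h => by rwa [hammingDist_comm]⟩
  loopless := ⟨fun x h => by simp [hammingDist_self] at h⟩

/-- The Hamming graph `H(n,q)` on `[q]^n`: adjacency is Hamming distance one. -/
def hammingGraph (n q : ℕ) : SimpleGraph (Fin n → Fin q) where
  Adj x y := hammingDist x y = 1
  symm := ⟨fun x y h => by rwa [hammingDist_comm]⟩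
  loopless := ⟨fun x h => by simp [hammingDist_self] at h⟩

/-- The Johnson graph `J(n,k)` on `k`-subsets of `[n]`. -/
def johnsonGraph (n k : ℕ) : SimpleGraph {s : Finset (Fin n) // s.card = k} where
  Adj u v := u ≠ v ∧ (u.1 ∩ v.1).card = k - 1
  symm := ⟨by rintro u v ⟨h1, h2⟩; exact ⟨h1.symm, by rwa [Finset.inter_comm]⟩⟩
  loopless := ⟨by rintro u ⟨h1, -⟩; exact h1 rfl⟩

/-- The halved `n`-cube on even-weight vectors of `F₂^n`: adjacency is Hamming distance two. -/
def halvedCubeGraph (n : ℕ) : SimpleGraph {x : Fin n → ZMod 2 // ∑ i, x i = 0} where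
  Adj x y := hammingDist x.1 y.1 = 2
  symm := ⟨fun x y h => by rwa [hammingDist_comm]⟩
  loopless := ⟨fun x h => by simp [hammingDist_self] at h⟩

/-- The cycle `C_n` on `ℤ_n`. -/
def cycleGraphZMod (n : ℕ) : SimpleGraph (ZMod n) where
  Adj x y := x ≠ y ∧ (x - y = 1 ∨ y - x = 1)
  symm := ⟨by rintro x y ⟨h1, h2⟩; exact ⟨h1.symm, h2.symm⟩⟩
  loopless := ⟨by rintro x ⟨h1, -⟩; exact h1 rfl⟩


lemma cube_walk_le (n : ℕ) : ∀ (d : ℕ) (x y : Fin n → Bool), hammingDist x y ≤ d →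
    ∃ w : (cubeGraph n).Walk x y, w.length ≤ d := by
  intro d
  induction d with
  | zero =>
    intro x y h
    obtain rfl := hammingDist_eq_zero.mp (Nat.le_zero.mp h)
    exact ⟨SimpleGraph.Walk.nil, le_rfl⟩
  | succ d ih =>
    intro x y h
    by_cases hxy : x = y
    · subst hxy; exact ⟨SimpleGraph.Walk.nil, Nat.zero_le _⟩
    · have hpos : 0 < hammingDist x y := by
        rcases Nat.eq_zero_or_pos (hammingDist x y) with h0 | h0
        · exact absurd (hammingDist_eq_zero.mp h0) hxy
        · exact h0
      have hne : ({i | x i ≠ y i} : Finset (Fin n)).Nonempty := by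
        rw [← Finset.card_pos]; exact hpos
      obtain ⟨i, hi⟩ := hne
      simp only [Finset.mem_filter] at hi
      have hixy : x i ≠ y i := hi.2
      set x' := Function.update x i (y i) with hx'
      have hadj : (cubeGraph n).Adj x x' := by
        show hammingDist x x' = 1
        have : ({j | x j ≠ x' j} : Finset (Fin n)) = {i} := by
          ext j
          simp only [Finset.mem_filter, Finset.mem_univ, true_and, Finset.mem_singleton, hx']
          constructor
          · intro hj
            by_contra hji
            rw [Function.update_of_ne hji] at hj
            exact hj rfl
          · rintro rfl
            rw [Function.update_self]; exact hixy
        show ({j | x j ≠ x' j} : Finset (Fin n)).card = 1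
        rw [this, Finset.card_singleton]
      have hsub : ({j | x' j ≠ y j} : Finset (Fin n)) ⊆ ({j | x j ≠ y j} : Finset (Fin n)) \ {i} := by
        intro j hj
        simp only [Finset.mem_filter, Finset.mem_univ, true_and, hx'] at hj
        simp only [Finset.mem_sdiff, Finset.mem_filter, Finset.mem_univ, true_and,
          Finset.mem_singleton]
        by_cases hji : j = i
        · subst hji; rw [Function.update_self] at hj; exact absurd rfl hj
        · rw [Function.update_of_ne hji] at hj; exact ⟨hj, hji⟩
      have hle : hammingDist x' y ≤ d := by
        have h1 : (({j | x j ≠ y j} : Finset (Fin n)) \ {i}).card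
            = hammingDist x y - 1 := by
          rw [Finset.card_sdiff_of_subset (by simpa using hi.2), Finset.card_singleton]
          rfl
        calc hammingDist x' y ≤ _ := Finset.card_le_card hsub
          _ = hammingDist x y - 1 := h1
          _ ≤ d := by omega
      obtain ⟨w, hw⟩ := ih x' y hle
      exact ⟨SimpleGraph.Walk.cons hadj w, by simpa using Nat.succ_le_succ hw⟩

lemma cube_dist_le (n : ℕ) (x y : Fin n → Bool) :
    (cubeGraph n).dist x y ≤ hammingDist x y := by
  obtain ⟨w, hw⟩ := cube_walk_le n (hammingDist x y) x y le_rfl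
  exact le_trans (SimpleGraph.dist_le w) hw

/-- `burn(Q_n) ≤ ⌈n/2⌉ + 1`. -/
theorem cube_burningNumber_le (n : ℕ) :
    burningNumber (cubeGraph n) ≤ (n + 1) / 2 + 1 := by
  apply Nat.sInf_le
  set b := (n + 1) / 2 + 1 with hb
  refine ⟨fun i => if (i : ℕ) = 0 then (fun _ => false) else (fun _ => true), ?_⟩
  intro x
  have hsum : hammingDist (fun _ => false) x + hammingDist (fun _ => true) x = n := by
    have : ({j | (fun _ => false) j ≠ x j} : Finset (Fin n)).card
        + ({j | (fun _ => true) j ≠ x j} : Finset (Fin n)).card = n := by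
      have hcompl : ({j | (fun _ => true) j ≠ x j} : Finset (Fin n))
          = ({j | (fun _ => false) j ≠ x j} : Finset (Fin n))ᶜ := by
        ext j
        simp only [Finset.mem_filter, Finset.mem_univ, true_and, Finset.mem_compl]
        cases x j <;> simp
      rw [hcompl, Finset.card_add_card_compl, Fintype.card_fin]
    exact this
  by_cases hw : hammingDist (fun _ => false) x ≤ (n + 1) / 2
  · refine ⟨⟨0, by omega⟩, ?_⟩
    simp only [Fin.val_mk, if_pos rfl]
    calc (cubeGraph n).dist (fun _ => false) x ≤ hammingDist (fun _ => false) x :=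
          cube_dist_le n _ _
      _ ≤ b - 1 - 0 := by omega
  · have hn1 : 1 ≤ n := by
      have := hammingDist_le_card_fintype (x := fun _ : Fin n => false) (y := x)
      simp only [Fintype.card_fin] at this
      omega
    refine ⟨⟨1, by omega⟩, ?_⟩
    simp only [Fin.val_mk, if_neg one_ne_zero]
    calc (cubeGraph n).dist (fun _ => true) x ≤ hammingDist (fun _ => true) x :=
          cube_dist_le n _ _
      _ ≤ b - 1 - 1 := by omega
end

section
/- Let n ≥ 2k ≥ 2, a = ⌈n/k⌉, and b = (1 − 1/a)·k + (a+1)/2. Then the burning number of the Johnson graph J(n,k) is at most ⌊b⌋. -/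
open Finset

lemma johnson_exists_walk_aux (n k : ℕ) :
    ∀ (d : ℕ) (u v : {s : Finset (Fin n) // s.card = k}), (u.1 \ v.1).card ≤ d →
      ∃ p : (johnsonGraph n k).Walk u v, p.length ≤ d := by
  intro d
  induction d with
  | zero =>
    intro u v h
    have h0 : (u.1 \ v.1) = ∅ := card_eq_zero.mp (Nat.le_zero.mp h)
    have hsub : u.1 ⊆ v.1 := sdiff_eq_empty_iff_subset.mp h0
    have : u = v := Subtype.ext (Finset.eq_of_subset_of_card_le hsub (by rw [u.2, v.2]))
    subst this
    exact ⟨SimpleGraph.Walk.nil, le_refl 0⟩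
  | succ d ih =>
    intro u v h
    by_cases hne : u.1 \ v.1 = ∅
    · have hsub : u.1 ⊆ v.1 := sdiff_eq_empty_iff_subset.mp hne
      have : u = v := Subtype.ext (Finset.eq_of_subset_of_card_le hsub (by rw [u.2, v.2]))
      subst this
      exact ⟨SimpleGraph.Walk.nil, by simp⟩
    · obtain ⟨α, hα⟩ := Finset.nonempty_of_ne_empty hne
      have hcards : (u.1 \ v.1).card = (v.1 \ u.1).card := by
        have h1 := Finset.card_sdiff_add_card_inter u.1 v.1
        have h2 := Finset.card_sdiff_add_card_inter v.1 u.1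
        rw [u.2] at h1; rw [v.2, Finset.inter_comm] at h2; omega
      have hvu : (v.1 \ u.1).Nonempty := by
        rw [← Finset.card_pos, ← hcards, Finset.card_pos]
        exact ⟨α, hα⟩
      obtain ⟨β, hβ⟩ := hvu
      rw [Finset.mem_sdiff] at hα hβ
      have hαu : α ∈ u.1 := hα.1
      have hαv : α ∉ v.1 := hα.2
      have hβv : β ∈ v.1 := hβ.1
      have hβu : β ∉ u.1 := hβ.2
      have hkpos : 0 < k := by rw [← u.2]; exact Finset.card_pos.mpr ⟨α, hαu⟩
      have hu'card : (insert β (u.1.erase α)).card = k := by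
        rw [Finset.card_insert_of_notMem (fun hc => hβu (Finset.mem_of_mem_erase hc)),
          Finset.card_erase_of_mem hαu, u.2]
        omega
      set U' : {s : Finset (Fin n) // s.card = k} := ⟨insert β (u.1.erase α), hu'card⟩ with hU'
      have hαU' : α ∉ U'.1 := by
        simp only [hU', Finset.mem_insert, Finset.mem_erase]
        rintro (rfl | ⟨hne', -⟩)
        · exact hβu hαu
        · exact hne' rfl
      have hadj : (johnsonGraph n k).Adj u U' := by
        constructor
        · intro hc
          rw [hc] at hαu
          exact hαU' hαu
        · have hint : u.1 ∩ U'.1 = u.1.erase α := by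
            ext x
            simp only [hU', Finset.mem_inter, Finset.mem_insert, Finset.mem_erase]
            constructor
            · rintro ⟨hxu, rfl | ⟨h1, h2⟩⟩
              · exact absurd hxu hβu
              · exact ⟨h1, hxu⟩
            · rintro ⟨h1, h2⟩
              exact ⟨h2, Or.inr ⟨h1, h2⟩⟩
          rw [hint, Finset.card_erase_of_mem hαu, u.2]
      have hstep : (U'.1 \ v.1).card ≤ d := by
        have hsub2 : U'.1 \ v.1 ⊆ (u.1 \ v.1).erase α := by
          intro x hx
          simp only [hU', Finset.mem_sdiff, Finset.mem_insert, Finset.mem_erase] at hx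
          rcases hx with ⟨rfl | ⟨h1, h2⟩, hxv⟩
          · exact absurd hβv hxv
          · exact Finset.mem_erase.mpr ⟨h1, Finset.mem_sdiff.mpr ⟨h2, hxv⟩⟩
        have hc1 : (U'.1 \ v.1).card ≤ ((u.1 \ v.1).erase α).card := Finset.card_le_card hsub2
        rw [Finset.card_erase_of_mem (Finset.mem_sdiff.mpr ⟨hαu, hαv⟩)] at hc1
        omega
      obtain ⟨p, hp⟩ := ih U' v hstep
      exact ⟨SimpleGraph.Walk.cons hadj p, by simp only [SimpleGraph.Walk.length_cons]; omega⟩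

lemma johnson_dist_le_aux (n k : ℕ) (u v : {s : Finset (Fin n) // s.card = k}) :
    (johnsonGraph n k).dist u v ≤ (u.1 \ v.1).card := by
  obtain ⟨p, hp⟩ := johnson_exists_walk_aux n k _ u v le_rfl
  exact (SimpleGraph.dist_le p).trans hp

lemma exists_cover_aux (n k a : ℕ) (hk : 0 < k) (hkn : k ≤ n) (hna : n ≤ a * k) :
    ∃ S : ℕ → Finset (Fin n), (∀ j, (S j).card = k) ∧
      ∀ m : Fin n, ∃ j < a, m ∈ S j := by
  have hstart : ∀ j : ℕ, min (j * k) (n - k) + k ≤ n := fun j => by omega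
  refine ⟨fun j => (Finset.Ico (min (j*k) (n-k)) (min (j*k) (n-k) + k)).attachFin
    (fun m hm => by rw [Finset.mem_Ico] at hm; have := hstart j; omega), fun j => ?_, fun m => ?_⟩
  · rw [Finset.card_attachFin, Nat.card_Ico]; omega
  · refine ⟨(m : ℕ) / k, ?_, ?_⟩
    · exact (Nat.div_lt_iff_lt_mul hk).mpr (lt_of_lt_of_le m.2 hna)
    · rw [Finset.mem_attachFin, Finset.mem_Ico]
      have h1 := Nat.div_mul_le_self (m : ℕ) k
      have h2 := Nat.div_add_mod (m : ℕ) k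
      have h3 := Nat.mod_lt (m : ℕ) hk
      have h4 : (m : ℕ) < n := m.2
      have h5 : (m : ℕ) / k * k = k * ((m : ℕ) / k) := Nat.mul_comm _ _
      omega

/-- For `n ≥ 2k ≥ 2` and `a = ⌈n/k⌉`,
`burn(J(n,k)) ≤ ⌊(1 - 1/a)k + (a+1)/2⌋`. -/
theorem johnson_burningNumber_le (n k : ℕ) (hk : 1 ≤ k) (hn : 2 * k ≤ n) :
    burningNumber (johnsonGraph n k) ≤
      ⌊(1 - 1 / (⌈(n : ℝ) / k⌉₊ : ℝ)) * k + ((⌈(n : ℝ) / k⌉₊ : ℝ) + 1) / 2⌋₊ := by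
  set a : ℕ := ⌈(n : ℝ) / k⌉₊ with ha_def
  set B : ℕ := ⌊(1 - 1 / (a : ℝ)) * k + ((a : ℝ) + 1) / 2⌋₊ with hB_def
  have hkR : (0 : ℝ) < k := by exact_mod_cast hk
  have ha2 : 2 ≤ a := by
    have h1 : (1 : ℝ) < (n : ℝ) / k := by
      rw [lt_div_iff₀ hkR]
      have : (2 * k : ℝ) ≤ n := by exact_mod_cast hn
      linarith
    exact Nat.lt_ceil.mpr (by exact_mod_cast h1)
  have haR : (2 : ℝ) ≤ (a : ℝ) := by exact_mod_cast ha2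
  have hapos : (0 : ℝ) < (a : ℝ) := by linarith
  have hainv : 1 / (a : ℝ) * a = 1 := by field_simp
  have h1a : (1 : ℝ) / a ≤ 1 := by rw [div_le_one hapos]; linarith
  have hnak : n ≤ a * k := by
    have h1 := Nat.le_ceil ((n : ℝ) / k)
    rw [div_le_iff₀ hkR] at h1
    exact_mod_cast h1
  have hkn : k ≤ n := by omega
  have hfloorB : ∀ m : ℕ, ((m : ℝ) ≤ (1 - 1 / (a : ℝ)) * k + ((a : ℝ) + 1) / 2) → m ≤ B :=
    fun m h => by rw [hB_def]; exact Nat.le_floor h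
  have hBr0 : (1 - 1 / (a : ℝ)) * k + ((a : ℝ) + 1) / 2 < (B : ℝ) + 1 := by
    rw [hB_def]; exact Nat.lt_floor_add_one _
  clear hB_def ha_def
  clear_value a B
  have hB1 : 1 ≤ B := by
    apply hfloorB
    have h0 : (0 : ℝ) ≤ (1 - 1 / (a : ℝ)) * k := by
      apply mul_nonneg <;> nlinarith
    push_cast
    nlinarith
  obtain ⟨S, hScard, hCover⟩ := exists_cover_aux n k a hk hkn hnak
  rcases lt_or_ge k B with hkB | hBk
  · -- trivial case: one center suffices
    apply Nat.sInf_le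
    refine ⟨fun _ => ⟨S 0, hScard 0⟩, fun x => ⟨⟨0, by omega⟩, ?_⟩⟩
    have hd : (johnsonGraph n k).dist ⟨S 0, hScard 0⟩ x ≤ (S 0 \ x.1).card :=
      johnson_dist_le_aux n k ⟨S 0, hScard 0⟩ x
    have hle : (S 0 \ x.1).card ≤ k := by
      calc (S 0 \ x.1).card ≤ (S 0).card := Finset.card_le_card Finset.sdiff_subset
        _ = k := hScard 0
    show (johnsonGraph n k).dist ⟨S 0, hScard 0⟩ x ≤ B - 1 - 0
    omega
  · -- main case: B ≤ k
    have ha2k : a ≤ 2 * k := by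
      by_contra hc
      push_neg at hc
      have hca : (2 * k + 1 : ℝ) ≤ (a : ℝ) := by exact_mod_cast hc
      have : k + 1 ≤ B := by
        apply hfloorB
        have h0 : (0 : ℝ) ≤ (1 - 1 / (a : ℝ)) * k := by
          apply mul_nonneg <;> nlinarith
        push_cast
        nlinarith
      omega
    have haB : a ≤ B := by
      apply hfloorB
      have hc2 : (a : ℝ) ≤ 2 * k := by exact_mod_cast ha2k
      have hmul := mul_le_mul_of_nonneg_right hc2 (by linarith : (0:ℝ) ≤ (a:ℝ) - 1)
      have hx : (a : ℝ) * (1 / a) * k = k := by field_simp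
      rw [← mul_le_mul_iff_right₀ hapos]
      nlinarith [hx, hmul]
    apply Nat.sInf_le
    refine ⟨fun i => ⟨S i, hScard i⟩, fun x => ?_⟩
    have key : ∃ j, j < a ∧ (k : ℤ) ≤ (B : ℤ) - j - 1 + ((x.1 ∩ S j).card : ℤ) := by
      by_contra hc
      push_neg at hc
      have hsub : x.1 ⊆ (Finset.range a).biUnion (fun j => x.1 ∩ S j) := by
        intro m hm
        obtain ⟨j, hj, hmj⟩ := hCover m
        exact Finset.mem_biUnion.mpr ⟨j, Finset.mem_range.mpr hj, Finset.mem_inter.mpr ⟨hm, hmj⟩⟩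
      have hsum : (k : ℤ) ≤ ∑ j ∈ Finset.range a, ((x.1 ∩ S j).card : ℤ) := by
        have h1 := (Finset.card_le_card hsub).trans Finset.card_biUnion_le
        rw [x.2] at h1
        exact_mod_cast h1
      have hsum2 : ∑ j ∈ Finset.range a, ((x.1 ∩ S j).card : ℤ) ≤
          ∑ j ∈ Finset.range a, ((k : ℤ) - B + j) := by
        apply Finset.sum_le_sum
        intro j hj
        have := hc j (Finset.mem_range.mp hj)
        omega
      have hgauss : (∑ j ∈ Finset.range a, (j : ℤ)) * 2 = (a : ℤ) * ((a : ℤ) - 1) := by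
        have h := Finset.sum_range_id_mul_two a
        have h2 : (((∑ i ∈ Finset.range a, i) * 2 : ℕ) : ℤ) = ((a * (a - 1) : ℕ) : ℤ) := by
          rw [h]
        push_cast [Nat.cast_sub (show 1 ≤ a by omega)] at h2
        exact h2
      have hsum3 : ∑ j ∈ Finset.range a, ((k : ℤ) - B + j) =
          (a : ℤ) * ((k : ℤ) - B) + ∑ j ∈ Finset.range a, (j : ℤ) := by
        rw [Finset.sum_add_distrib, Finset.sum_const, Finset.card_range]
        push_cast
        ring
      have hZ : 2 * (k : ℤ) ≤ 2 * (a : ℤ) * ((k : ℤ) - B) + (a : ℤ) * ((a : ℤ) - 1) := by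
        have := hsum.trans hsum2
        rw [hsum3] at this
        nlinarith [hgauss]
      have hZR : 2 * (k : ℝ) ≤ 2 * (a : ℝ) * ((k : ℝ) - B) + (a : ℝ) * ((a : ℝ) - 1) := by
        exact_mod_cast hZ
      have hBr' := mul_lt_mul_of_pos_left hBr0 hapos
      have hx : (a : ℝ) * (1 / a) * k = k := by field_simp
      linarith [hBr', hx, hZR]
    obtain ⟨j, hja, hjb⟩ := key
    refine ⟨⟨j, lt_of_lt_of_le hja haB⟩, ?_⟩
    have hd : (johnsonGraph n k).dist ⟨S j, hScard j⟩ x ≤ (S j \ x.1).card :=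
      johnson_dist_le_aux n k ⟨S j, hScard j⟩ x
    have hcard : (S j \ x.1).card + (S j ∩ x.1).card = k := by
      rw [Finset.card_sdiff_add_card_inter]; exact hScard j
    have hcomm : (x.1 ∩ S j).card = (S j ∩ x.1).card := by rw [Finset.inter_comm]
    rw [hcomm] at hjb
    have hjB : j < B := lt_of_lt_of_le hja haB
    show (johnsonGraph n k).dist ⟨S j, hScard j⟩ x ≤ B - 1 - j
    omega
end

section
/- If n > k², then the burning number of the Johnson graph J(n,k) equals k + 1. -/
open Finset

section JohnsonAux

variable {n k : ℕ}

lemma johnson_adj_sdiff (hk : 1 ≤ k) {u y : {s : Finset (Fin n) // s.card = k}}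
    (h : (johnsonGraph n k).Adj u y) : (u.1 \ y.1).card = 1 := by
  have h2 := h.2
  have h3 := Finset.card_sdiff_add_card_inter u.1 y.1
  rw [u.2] at h3
  omega

lemma johnson_exists_walk (u w : {s : Finset (Fin n) // s.card = k}) :
    ∃ p : (johnsonGraph n k).Walk u w, p.length = (u.1 \ w.1).card := by
  generalize hc : (u.1 \ w.1).card = c
  induction c generalizing u with
  | zero =>
    have hsub : u.1 ⊆ w.1 := by
      rwa [Finset.card_eq_zero, Finset.sdiff_eq_empty_iff_subset] at hc
    have huw : u = w := Subtype.ext (Finset.eq_of_subset_of_card_le hsub (by rw [u.2, w.2]))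
    subst huw
    exact ⟨SimpleGraph.Walk.nil, rfl⟩
  | succ c ih =>
    have hu : (u.1 \ w.1).Nonempty := by rw [← Finset.card_pos, hc]; omega
    obtain ⟨a, ha0⟩ := hu
    have ha := Finset.mem_sdiff.mp ha0
    have hcards : (w.1 \ u.1).card = c + 1 := by
      have h1 := Finset.card_sdiff_add_card_inter u.1 w.1
      have h2 := Finset.card_sdiff_add_card_inter w.1 u.1
      rw [Finset.inter_comm] at h2
      rw [u.2] at h1; rw [w.2] at h2; omega
    have hw : (w.1 \ u.1).Nonempty := by rw [← Finset.card_pos, hcards]; omega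
    obtain ⟨e, he0⟩ := hw
    have he := Finset.mem_sdiff.mp he0
    have hk1 : 0 < k := u.2 ▸ Finset.card_pos.mpr ⟨a, ha.1⟩
    have hes : e ∉ u.1.erase a := fun h => he.2 (Finset.mem_of_mem_erase h)
    have hcard' : (insert e (u.1.erase a)).card = k := by
      rw [Finset.card_insert_of_notMem hes, Finset.card_erase_of_mem ha.1, u.2]; omega
    set u' : {s : Finset (Fin n) // s.card = k} := ⟨insert e (u.1.erase a), hcard'⟩ with hu'
    have hane : a ≠ e := fun h => ha.2 (h ▸ he.1)
    have hans' : a ∉ u'.1 := by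
      intro h
      rcases Finset.mem_insert.mp h with h | h
      · exact hane h
      · exact (Finset.notMem_erase a u.1) h
    have hinter : u.1 ∩ u'.1 = u.1.erase a := by
      ext x
      simp only [hu', Finset.mem_inter, Finset.mem_insert, Finset.mem_erase]
      constructor
      · rintro ⟨hxu, (rfl | ⟨hxa, hxu'⟩)⟩
        · exact absurd hxu he.2
        · exact ⟨hxa, hxu⟩
      · rintro ⟨hxa, hxu⟩; exact ⟨hxu, Or.inr ⟨hxa, hxu⟩⟩
    have hadj : (johnsonGraph n k).Adj u u' := by
      refine ⟨?_, ?_⟩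
      · intro h; exact hans' (h ▸ ha.1)
      · rw [hinter, Finset.card_erase_of_mem ha.1, u.2]
    have hsd : u'.1 \ w.1 = (u.1 \ w.1).erase a := by
      ext x
      simp only [hu', Finset.mem_sdiff, Finset.mem_insert, Finset.mem_erase]
      constructor
      · rintro ⟨(rfl | ⟨hxa, hxu⟩), hxw⟩
        · exact absurd he.1 hxw
        · exact ⟨hxa, hxu, hxw⟩
      · rintro ⟨hxa, hxu, hxw⟩; exact ⟨Or.inr ⟨hxa, hxu⟩, hxw⟩
    obtain ⟨p, hp⟩ := ih u' (by rw [hsd, Finset.card_erase_of_mem ha0, hc]; omega)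
    exact ⟨SimpleGraph.Walk.cons hadj p, by simp [hp]⟩

lemma johnson_sdiff_le_walk_length (hk : 1 ≤ k) {u w : {s : Finset (Fin n) // s.card = k}}
    (p : (johnsonGraph n k).Walk u w) : (u.1 \ w.1).card ≤ p.length := by
  induction p with
  | nil => simp
  | @cons u y w h p ih =>
    have h1 : (u.1 \ y.1).card = 1 := johnson_adj_sdiff hk h
    have hsub : u.1 \ w.1 ⊆ (u.1 \ y.1) ∪ (y.1 \ w.1) := by
      intro x hx
      simp only [Finset.mem_sdiff, Finset.mem_union] at *
      tauto
    have h2 := Finset.card_le_card hsub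
    have h3 := Finset.card_union_le (u.1 \ y.1) (y.1 \ w.1)
    simp only [SimpleGraph.Walk.length_cons]
    omega

lemma johnson_dist (hk : 1 ≤ k) (u w : {s : Finset (Fin n) // s.card = k}) :
    (johnsonGraph n k).dist u w = (u.1 \ w.1).card := by
  obtain ⟨p, hp⟩ := johnson_exists_walk u w
  refine le_antisymm (le_of_le_of_eq (SimpleGraph.dist_le p) hp) ?_
  obtain ⟨q, hq⟩ := SimpleGraph.Reachable.exists_walk_length_eq_dist ⟨p⟩
  rw [← hq]
  exact johnson_sdiff_le_walk_length hk q

lemma johnson_exists_good_set (n k b : ℕ) (hk : 1 ≤ k) (hb : b ≤ k) (hn : k ^ 2 < n)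
    (v : Fin b → Finset (Fin n)) (hv : ∀ i, (v i).card = k) :
    ∃ x : Finset (Fin n), x.card = k ∧ ∀ i : Fin b, (x ∩ v i).card ≤ k - (b - (i : ℕ)) := by
  suffices h : ∀ m, m ≤ k → ∃ x : Finset (Fin n), x.card = m ∧
      ∀ i : Fin b, (x ∩ v i).card ≤ m - (b - (i : ℕ)) from h k le_rfl
  intro m
  induction m with
  | zero => intro _; exact ⟨∅, by simp, fun i => by simp⟩
  | succ m ih =>
    intro hm
    obtain ⟨x, hxc, hxi⟩ := ih (by omega)
    set F := x ∪ (Finset.univ.filter (fun i : Fin b => (i : ℕ) + m + 1 ≤ b)).biUnion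
        (fun i => v i) with hF
    have hfc : (Finset.univ.filter (fun i : Fin b => (i : ℕ) + m + 1 ≤ b)).card ≤ b - m := by
      have := Finset.card_le_card_of_injOn (fun i : Fin b => (i : ℕ))
        (s := Finset.univ.filter (fun i : Fin b => (i : ℕ) + m + 1 ≤ b))
        (t := Finset.range (b - m))
        (fun i hi => by
          simp only [Finset.mem_coe, Finset.mem_filter] at hi
          simp only [Finset.mem_coe, Finset.mem_range]
          omega)
        (fun i _ j _ hij => Fin.val_injective hij)
      simpa using this
    have hFcard : F.card ≤ m + (b - m) * k := by
      refine le_trans (Finset.card_union_le _ _) ?_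
      have h1 : ((Finset.univ.filter (fun i : Fin b => (i : ℕ) + m + 1 ≤ b)).biUnion
          (fun i => v i)).card ≤ (b - m) * k := by
        refine le_trans Finset.card_biUnion_le ?_
        refine le_trans (Finset.sum_le_card_nsmul _ _ k (fun i _ => le_of_eq (hv i))) ?_
        simp only [smul_eq_mul]
        exact Nat.mul_le_mul_right k hfc
      omega
    have hkey : m + (b - m) * k ≤ k ^ 2 := by
      have h6 : k ^ 2 = k * k := sq k
      rcases le_or_gt b m with h | h
      · have hz : b - m = 0 := by omega
        have h4 : k ≤ k * k := Nat.le_mul_of_pos_right k (by omega)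
        rw [hz]
        omega
      · have h1 : b - m ≤ k - m := by omega
        have h2 : (b - m) * k ≤ (k - m) * k := Nat.mul_le_mul_right k h1
        have h3 : (k - m) * k = k * k - m * k := Nat.sub_mul k m k
        have h4 : m ≤ m * k := Nat.le_mul_of_pos_right m (by omega)
        have h5 : m * k ≤ k * k := Nat.mul_le_mul_right k (by omega : m ≤ k)
        omega
    have hFn : F.card < n := lt_of_le_of_lt (le_trans hFcard hkey) hn
    have hcompl : Fᶜ.Nonempty := by
      rw [← Finset.card_pos, Finset.card_compl, Fintype.card_fin]
      omega
    obtain ⟨a, hac⟩ := hcompl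
    have haF : a ∉ F := Finset.mem_compl.mp hac
    have hax : a ∉ x := fun h => haF (Finset.mem_union_left _ h)
    refine ⟨insert a x, by rw [Finset.card_insert_of_notMem hax, hxc], ?_⟩
    intro i
    have hib : (i : ℕ) < b := i.2
    by_cases hav : a ∈ v i
    · have him : ¬ ((i : ℕ) + m + 1 ≤ b) := by
        intro hle
        exact haF (Finset.mem_union_right _ (Finset.mem_biUnion.mpr
          ⟨i, Finset.mem_filter.mpr ⟨Finset.mem_univ i, hle⟩, hav⟩))
      rw [Finset.insert_inter_of_mem hav]
      have h1 := hxi i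
      have h2 : (insert a (x ∩ v i)).card ≤ (x ∩ v i).card + 1 := Finset.card_insert_le _ _
      omega
    · rw [Finset.insert_inter_of_notMem hav]
      have h1 := hxi i
      omega

end JohnsonAux

/-- If `n > k²`, then `burn(J(n,k)) = k + 1`. -/
theorem johnson_burningNumber_of_large (n k : ℕ) (hk : 1 ≤ k) (hn : k ^ 2 < n) :
    burningNumber (johnsonGraph n k) = k + 1 := by
  have hk2 : k ≤ k ^ 2 := Nat.le_self_pow (by norm_num) k
  have hkn : k ≤ n := le_trans hk2 (le_of_lt hn)
  obtain ⟨s0, hs0sub, hs0⟩ := Finset.exists_subset_card_eq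
    (show k ≤ (Finset.univ : Finset (Fin n)).card by simpa using hkn)
  have hmem : (k + 1) ∈ {b | ∃ v : Fin b → {s : Finset (Fin n) // s.card = k},
      IsBurningSeq (johnsonGraph n k) v} := by
    refine ⟨fun _ => ⟨s0, hs0⟩, fun x => ⟨⟨0, by omega⟩, ?_⟩⟩
    have hd := johnson_dist hk ⟨s0, hs0⟩ x
    have hle : (s0 \ x.1).card ≤ k := le_trans (Finset.card_le_card Finset.sdiff_subset)
      (le_of_eq hs0)
    simp only [hd]
    omega
  refine le_antisymm (Nat.sInf_le hmem) (le_csInf ⟨k + 1, hmem⟩ ?_)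
  rintro b ⟨v, hv⟩
  by_contra hlt
  push_neg at hlt
  have hble : b ≤ k := by omega
  obtain ⟨x, hx, hxi⟩ := johnson_exists_good_set n k b hk hble hn (fun i => (v i).1)
    (fun i => (v i).2)
  obtain ⟨i, hi⟩ := hv ⟨x, hx⟩
  have hd : (johnsonGraph n k).dist (v i) ⟨x, hx⟩ = ((v i).1 \ x).card :=
    johnson_dist hk (v i) ⟨x, hx⟩
  have h1 := hxi i
  have h2 := Finset.card_sdiff_add_card_inter (v i).1 x
  rw [(v i).2] at h2
  rw [Finset.inter_comm] at h1
  have hib : (i : ℕ) < b := i.2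
  rw [hd] at hi
  omega
end
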